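/- (Minimax characterization of homogeneous feasibility) Let A be a real m × n matrix with columns a_1, ..., a_n, and let Σ_n = {x ∈ ℝ^n : Σ_{i=1}^n x_i = 1, x ≥ 0} be the standard simplex. Then the set {x ∈ Σ_n : Ax = 0} is nonempty if and only if max_{x ∈ Σ_n} min_{y ∈ Σ_n} yᵀAᵀAx ≤ 0 (the maximum and minimum are attained since Σ_n is compact and the function is bilinear). -/

import Mathlib

private lemma cont_aux {m n : ℕ} (A : Matrix (Fin m) (Fin n) ℝ) (w : Fin m → ℝ) :
    Continuous fun v : Fin n → ℝ => dotProduct (A.mulVec v) w := by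
  simp only [dotProduct, Matrix.mulVec]
  fun_prop

private lemma cont_aux2 {m n : ℕ} (A : Matrix (Fin m) (Fin n) ℝ) :
    Continuous fun v : Fin n → ℝ => dotProduct (A.mulVec v) (A.mulVec v) := by
  simp only [dotProduct, Matrix.mulVec]
  fun_prop

/-- quadratic expansion argument: the nearest point inequality. -/
private lemma key_ineq (c d : ℝ) (hd : 0 ≤ d)
    (h : ∀ t : ℝ, 0 < t → t ≤ 1 → 0 ≤ 2 * t * c + t ^ 2 * d) : 0 ≤ c := by
  by_contra hc
  push_neg at hc
  rcases eq_or_lt_of_le hd with hd0 | hd0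
  · have := h 1 one_pos le_rfl
    nlinarith
  · rcases le_or_gt (-c / d) 1 with ht | ht
    · have htpos : 0 < -c / d := div_pos (by linarith) hd0
      have h5 := h (-c / d) htpos ht
      have h6 : 2 * (-c / d) * c + (-c / d) ^ 2 * d = -(c ^ 2 / d) := by
        field_simp
        ring
      rw [h6] at h5
      have h7 : 0 < c ^ 2 / d := div_pos (by nlinarith) hd0
      linarith
    · have := h 1 one_pos le_rfl
      have h8 : 1 * d < -c := (lt_div_iff₀ hd0).mp ht
      nlinarith

/-- **Minimax characterization of homogeneous feasibility**. The set
`{x ∈ Σₙ : Ax = 0}` is nonempty iff `max_{x ∈ Σₙ} min_{y ∈ Σₙ} yᵀAᵀAx ≤ 0`. -/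
theorem minimax_homogeneous_feasibility {m n : ℕ} (hn : 0 < n)
    (A : Matrix (Fin m) (Fin n) ℝ) :
    (∃ x ∈ stdSimplex ℝ (Fin n), A.mulVec x = 0) ↔
      (⨆ x : stdSimplex ℝ (Fin n), ⨅ y : stdSimplex ℝ (Fin n),
        dotProduct (A.mulVec (y : Fin n → ℝ)) (A.mulVec (x : Fin n → ℝ))) ≤ 0 := by
  have hS : IsCompact (stdSimplex ℝ (Fin n)) := isCompact_stdSimplex _ _
  haveI : Nonempty (Fin n) := ⟨⟨0, hn⟩⟩
  have hy0 : (Pi.single (⟨0, hn⟩ : Fin n) (1:ℝ)) ∈ stdSimplex ℝ (Fin n) :=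
    single_mem_stdSimplex ℝ _
  haveI hne : Nonempty (stdSimplex ℝ (Fin n)) := ⟨⟨_, hy0⟩⟩
  haveI : CompactSpace (stdSimplex ℝ (Fin n)) := isCompact_iff_compactSpace.mp hS
  have hbdd : ∀ x : Fin m → ℝ, BddBelow (Set.range fun y : stdSimplex ℝ (Fin n) =>
      dotProduct (A.mulVec (y : Fin n → ℝ)) x) := fun x =>
    (isCompact_range ((cont_aux A x).comp continuous_subtype_val)).bddBelow
  constructor
  · rintro ⟨x₀, hx₀, hAx₀⟩
    apply ciSup_le
    intro x
    refine le_trans (ciInf_le (hbdd _) ⟨x₀, hx₀⟩) ?_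
    show dotProduct (A.mulVec x₀) _ ≤ 0
    simp [hAx₀]
  · intro h
    -- minimizer of ‖Ax‖² on the simplex
    obtain ⟨xs, hxs, hmin⟩ := hS.exists_isMinOn ⟨_, hy0⟩ (cont_aux2 A).continuousOn
    refine ⟨xs, hxs, ?_⟩
    set p : Fin m → ℝ := A.mulVec xs with hp
    -- key: for every y ∈ simplex, ⟨Ay, p⟩ ≥ ⟨p, p⟩
    have hkey : ∀ y ∈ stdSimplex ℝ (Fin n),
        dotProduct p p ≤ dotProduct (A.mulVec y) p := by
      intro y hy
      set q : Fin m → ℝ := A.mulVec y with hq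
      have h1 : 0 ≤ dotProduct (q - p) (q - p) :=
        Finset.sum_nonneg fun i _ => mul_self_nonneg _
      have h2 := key_ineq (dotProduct q p - dotProduct p p)
        (dotProduct (q - p) (q - p)) h1 ?_
      · linarith
      · intro t ht0 ht1
        have hmem : xs + t • (y - xs) ∈ stdSimplex ℝ (Fin n) := by
          have := (convex_stdSimplex ℝ (Fin n)) hxs hy (by linarith : (0:ℝ) ≤ 1 - t)
            ht0.le (by ring)
          convert this using 1
          module
        have hle := hmin hmem
        have hAval : A.mulVec (xs + t • (y - xs)) = p + t • (q - p) := by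
          simp [hp, hq, Matrix.mulVec_add, Matrix.mulVec_smul, Matrix.mulVec_sub]
        have hle' : dotProduct p p ≤
            dotProduct (p + t • (q - p)) (p + t • (q - p)) := by
          simpa [hAval] using hle
        have hcomm : dotProduct (q - p) p = dotProduct p (q - p) :=
          dotProduct_comm _ _
        have hexp : dotProduct (p + t • (q - p)) (p + t • (q - p)) =
            dotProduct p p + 2 * t * (dotProduct q p - dotProduct p p)
              + t ^ 2 * dotProduct (q - p) (q - p) := by
          simp only [add_dotProduct, dotProduct_add, smul_dotProduct,
            dotProduct_smul, sub_dotProduct, dotProduct_sub, smul_eq_mul]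
          have := dotProduct_comm q p
          ring_nf
          nlinarith [dotProduct_comm q p]
        nlinarith [hle', hexp]
    -- now: 0 ≤ ⟨p,p⟩ ≤ inf ≤ sup ≤ 0
    have hinf : dotProduct p p ≤ ⨅ y : stdSimplex ℝ (Fin n),
        dotProduct (A.mulVec (y : Fin n → ℝ)) p :=
      le_ciInf fun y => hkey y y.2
    -- sup bdd above
    have hbddA : BddAbove (Set.range fun x : stdSimplex ℝ (Fin n) =>
        ⨅ y : stdSimplex ℝ (Fin n),
          dotProduct (A.mulVec (y : Fin n → ℝ)) (A.mulVec (x : Fin n → ℝ))) := by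
      obtain ⟨M, hM⟩ := (isCompact_range ((cont_aux2 A).comp
        (continuous_subtype_val : Continuous ((↑) : stdSimplex ℝ (Fin n) → Fin n → ℝ)))).bddAbove
      refine ⟨M, ?_⟩
      rintro r ⟨x, rfl⟩
      exact le_trans (ciInf_le (hbdd _) x) (hM (Set.mem_range_self x))
    have hsup := le_ciSup hbddA (⟨xs, hxs⟩ : stdSimplex ℝ (Fin n))
    have hpp0 : 0 ≤ dotProduct p p :=
      Finset.sum_nonneg fun i _ => mul_self_nonneg _
    have : dotProduct p p = 0 := le_antisymm (by
      calc dotProduct p p ≤ _ := hinf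
        _ ≤ _ := hsup
        _ ≤ 0 := h) hpp0
    exact dotProduct_self_eq_zero.mp this
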